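/- arXiv:1706.09681 — 2 statements merged into one kernel-verified Lean document; each statement's English description precedes it below -/
import Mathlib

section
/- (Dobinski-type formula) For λ ∈ ℝ, r a nonnegative integer, every nonnegative integer n, and every real x, the extended degenerate Bell polynomial satisfies Bel^{(r)}_{n,λ}(x) = e^{−x} Σ_{m=0}^{n} λ^{n−m} S_1(n,m) Σ_{k=0}^{∞} (x^k/k!) (k+r)^m, where the inner infinite series converges absolutely. -/
open Finset

/-- The degenerate falling factorial `(x|λ)_n = x(x-λ)(x-2λ)⋯(x-(n-1)λ)`. -/
noncomputable def degFall (x lam : ℝ) (n : ℕ) : ℝ := ∏ i ∈ Finset.range n, (x - i * lam)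

/-- The formal power series `(1+λt)^{y/λ} = Σ_{m=0}^∞ (y|λ)_m t^m/m!`. -/
noncomputable def degExp (lam y : ℝ) : PowerSeries ℝ :=
  PowerSeries.mk fun m => degFall y lam m / m.factorial

/-- The degenerate Stirling numbers of the second kind `S_{2,λ}(n,k)`, defined by
`(1/k!)((1+λt)^{1/λ} - 1)^k = Σ_{n=k}^∞ S_{2,λ}(n,k) t^n/n!`. -/
noncomputable def degStirling2 (lam : ℝ) (n k : ℕ) : ℝ :=
  (n.factorial : ℝ) *
    PowerSeries.coeff n (((k.factorial : ℝ))⁻¹ • (degExp lam 1 - 1) ^ k)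

/-- The extended degenerate Stirling numbers of the second kind `S_{2,r}(n+r,k+r|λ)`,
defined by `(1/k!)(1+λt)^{r/λ}((1+λt)^{1/λ} - 1)^k = Σ_{n=k}^∞ S_{2,r}(n+r,k+r|λ) t^n/n!`. -/
noncomputable def extDegStirling2 (lam : ℝ) (r n k : ℕ) : ℝ :=
  (n.factorial : ℝ) *
    PowerSeries.coeff n
      (((k.factorial : ℝ))⁻¹ • (degExp lam r * (degExp lam 1 - 1) ^ k))

/-- The exponential `e^f = Σ_{k=0}^∞ f^k / k!` of a formal power series, computed
coefficientwise (the coefficientwise sums converge when `f` has zero constant term). -/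
noncomputable def expComp (f : PowerSeries ℝ) : PowerSeries ℝ :=
  PowerSeries.mk fun n => ∑' k : ℕ, PowerSeries.coeff n (f ^ k) / k.factorial

/-- The degenerate Bell polynomials, defined by
`e^{x((1+λt)^{1/λ} - 1)} = Σ_{n=0}^∞ Bel_{n,λ}(x) t^n/n!`. -/
noncomputable def degBell (lam x : ℝ) (n : ℕ) : ℝ :=
  (n.factorial : ℝ) * PowerSeries.coeff n (expComp (x • (degExp lam 1 - 1)))

/-- The extended degenerate Bell polynomials, defined by
`(1+λt)^{r/λ} e^{x((1+λt)^{1/λ} - 1)} = Σ_{n=0}^∞ Bel^{(r)}_{n,λ}(x) t^n/n!`. -/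
noncomputable def extDegBell (lam : ℝ) (r : ℕ) (x : ℝ) (n : ℕ) : ℝ :=
  (n.factorial : ℝ) *
    PowerSeries.coeff n (degExp lam r * expComp (x • (degExp lam 1 - 1)))

/-- The signed Stirling numbers of the first kind `S_1(n,k)`, defined by
`(x)_n = x(x-1)⋯(x-n+1) = Σ_{k=0}^n S_1(n,k) x^k`. -/
noncomputable def stirling1 (n k : ℕ) : ℝ :=
  (∏ i ∈ Finset.range n, (Polynomial.X - Polynomial.C (i : ℝ))).coeff k

/-- The Stirling numbers of the second kind, defined by
`(1/k!)(e^t - 1)^k = Σ_{n=k}^∞ S_2(n,k) t^n/n!`. -/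
noncomputable def stirling2 (n k : ℕ) : ℝ :=
  (n.factorial : ℝ) *
    PowerSeries.coeff n (((k.factorial : ℝ))⁻¹ • (PowerSeries.exp ℝ - 1) ^ k)

/-- The r-Stirling numbers of the second kind `S_{2,r}(n+r,k+r)`, defined by
`e^{rt}(1/k!)(e^t - 1)^k = Σ_{n=0}^∞ S_{2,r}(n+r,k+r) t^n/n!`. -/
noncomputable def rStirling2 (r n k : ℕ) : ℝ :=
  (n.factorial : ℝ) *
    PowerSeries.coeff n
      (PowerSeries.rescale (r : ℝ) (PowerSeries.exp ℝ) *
        ((k.factorial : ℝ))⁻¹ • (PowerSeries.exp ℝ - 1) ^ k)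

/-- The ordinary falling factorial `(x)_k = x(x-1)⋯(x-k+1)`. -/
noncomputable def fallFact (x : ℝ) (k : ℕ) : ℝ := ∏ i ∈ Finset.range k, (x - i)

lemma degFall_succ (x lam : ℝ) (n : ℕ) :
    degFall x lam (n+1) = degFall x lam n * (x - n * lam) := Finset.prod_range_succ _ _

lemma degFall_add (lam y z : ℝ) (n : ℕ) :
    degFall (y+z) lam n
      = ∑ i ∈ range (n+1), (n.choose i : ℝ) * degFall y lam i * degFall z lam (n-i) := by
  induction n with
  | zero => simp [degFall]
  | succ n ih =>
    rw [degFall_succ, ih, Finset.sum_mul]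
    have key : ∀ i ∈ range (n+1),
        (n.choose i : ℝ) * degFall y lam i * degFall z lam (n-i) * (y + z - n * lam)
          = (n.choose i : ℝ) * degFall y lam (i+1) * degFall z lam (n-i)
            + (n.choose i : ℝ) * degFall y lam i * degFall z lam ((n-i)+1) := by
      intro i hi
      rw [Finset.mem_range] at hi
      have h1 : (y + z - n * lam) = (y - i * lam) + (z - ((n - i : ℕ) : ℝ) * lam) := by
        have : ((n - i : ℕ) : ℝ) = (n : ℝ) - i := by
          have : i ≤ n := Nat.lt_succ_iff.mp hi
          push_cast [this]; ring
        rw [this]; ring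
      rw [h1, degFall_succ, degFall_succ]; ring
    rw [Finset.sum_congr rfl key, Finset.sum_add_distrib]
    -- first sum: reindex
    have e1 : ∑ i ∈ range (n+1), (n.choose i : ℝ) * degFall y lam (i+1) * degFall z lam (n-i)
        = ∑ i ∈ range (n+2), (if i = 0 then 0 else (n.choose (i-1) : ℝ)) * degFall y lam i * degFall z lam ((n+1)-i) := by
      rw [Finset.sum_range_succ' (fun i => (if i = 0 then 0 else (n.choose (i-1) : ℝ)) * degFall y lam i * degFall z lam ((n+1)-i))]
      simp only [Nat.succ_ne_zero, if_false, if_pos rfl, Nat.add_sub_cancel, Nat.succ_sub_succ,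
        zero_mul, add_zero, reduceIte]
      apply Finset.sum_congr rfl
      intro i hi
      congr 2
    have e2 : ∑ i ∈ range (n+1), (n.choose i : ℝ) * degFall y lam i * degFall z lam ((n-i)+1)
        = ∑ i ∈ range (n+2), (if i = n+1 then 0 else (n.choose i : ℝ)) * degFall y lam i * degFall z lam ((n+1)-i) := by
      conv_rhs => rw [Finset.sum_range_succ, if_pos rfl, zero_mul, zero_mul, add_zero]
      apply Finset.sum_congr rfl
      intro i hi
      rw [Finset.mem_range] at hi
      rw [if_neg (by omega)]
      congr 2
      omega
    rw [e1, e2, ← Finset.sum_add_distrib]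
    apply Finset.sum_congr rfl
    intro i hi
    rw [Finset.mem_range] at hi
    rcases Nat.eq_zero_or_pos i with h0 | h0
    · subst h0; simp
    · rcases Nat.lt_or_ge i (n+1) with h1 | h1
      · rw [if_neg (by omega), if_neg (by omega)]
        have : (n+1).choose i = n.choose (i-1) + n.choose i := by
          obtain ⟨j, rfl⟩ := Nat.exists_eq_succ_of_ne_zero (by omega : i ≠ 0)
          simp [Nat.choose_succ_succ]
        rw [this]; push_cast; ring
      · have : i = n+1 := by omega
        subst this
        rw [if_neg (by omega), if_pos rfl]
        simp [Nat.choose_succ_self_right, Nat.choose_self]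

lemma coeff_degExp (lam y : ℝ) (n : ℕ) :
    PowerSeries.coeff n (degExp lam y) = degFall y lam n / n.factorial := by
  simp [degExp]

lemma degExp_mul (lam y z : ℝ) : degExp lam y * degExp lam z = degExp lam (y+z) := by
  ext n
  rw [PowerSeries.coeff_mul, Finset.Nat.sum_antidiagonal_eq_sum_range_succ_mk, coeff_degExp,
    degFall_add, Finset.sum_div]
  apply Finset.sum_congr rfl
  intro i hi
  rw [Finset.mem_range, Nat.lt_succ_iff] at hi
  simp only [coeff_degExp]
  have hc : ((n.choose i : ℕ) : ℝ) * (i.factorial : ℝ) * ((n-i).factorial : ℝ) = (n.factorial : ℝ) := by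
    exact_mod_cast congrArg (Nat.cast (R := ℝ)) (Nat.choose_mul_factorial_mul_factorial hi)
  have hi0 : (i.factorial : ℝ) ≠ 0 := Nat.cast_ne_zero.mpr i.factorial_ne_zero
  have hi1 : ((n-i).factorial : ℝ) ≠ 0 := Nat.cast_ne_zero.mpr (n-i).factorial_ne_zero
  have hn0 : (n.factorial : ℝ) ≠ 0 := Nat.cast_ne_zero.mpr n.factorial_ne_zero
  field_simp
  rw [← hc]
  ring

lemma degExp_zero (lam : ℝ) : degExp lam 0 = 1 := by
  ext n
  rw [coeff_degExp]
  cases n with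
  | zero => simp [degFall]
  | succ m =>
    rw [PowerSeries.coeff_one, if_neg (Nat.succ_ne_zero m)]
    have : degFall 0 lam (m+1) = 0 := by
      simp [degFall, Finset.prod_range_succ']
    simp [this]

lemma degExp_pow (lam : ℝ) (k : ℕ) : (degExp lam 1)^k = degExp lam k := by
  induction k with
  | zero => simpa using (degExp_zero lam).symm
  | succ m ih =>
    rw [pow_succ, ih, degExp_mul]
    congr 1
    push_cast
    ring

lemma degExp_nat_mul (lam : ℝ) (r k : ℕ) :
    degExp lam r * (degExp lam 1)^k = degExp lam (k+r) := by
  rw [degExp_pow, degExp_mul]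
  norm_num [add_comm]

-- vanishing of coeff of (E-1)^j
lemma coeff_sub_one_pow (lam : ℝ) {n j : ℕ} (h : n < j) :
    PowerSeries.coeff n ((degExp lam 1 - 1)^j) = 0 := by
  have h0 : PowerSeries.X ∣ (degExp lam 1 - 1) := by
    rw [PowerSeries.X_dvd_iff, map_sub, map_one]
    have : PowerSeries.constantCoeff (degExp lam 1) = degFall 1 lam 0 / Nat.factorial 0 := by
      rw [← PowerSeries.coeff_zero_eq_constantCoeff_apply]
      simp [degExp]
    rw [this]
    simp [degFall]
  have : PowerSeries.X ^ j ∣ (degExp lam 1 - 1)^j := pow_dvd_pow_of_dvd h0 j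
  exact (PowerSeries.X_pow_dvd_iff.mp this) n h

section StirlingPoly
open Polynomial
lemma myNatDegree_prod_X_sub_C (a : ℕ → ℝ) (n : ℕ) :
    (∏ i ∈ range n, (X - C (a i))).natDegree = n := by
  rw [Polynomial.natDegree_prod _ _ (fun i _ => Polynomial.X_sub_C_ne_zero (a i))]
  simp [Polynomial.natDegree_X_sub_C]

lemma coeff_prod_X_sub_C_mul (lam : ℝ) (n : ℕ) :
    ∀ m, m ≤ n → (∏ i ∈ range n, (X - C ((i:ℝ) * lam))).coeff m
      = lam^(n-m) * stirling1 n m := by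
  induction n with
  | zero =>
    intro m hm
    interval_cases m
    simp [stirling1]
  | succ n ih =>
    intro m hm
    rw [Finset.prod_range_succ]
    have hs : stirling1 (n+1) m
        = ((∏ i ∈ range n, (X - C ((i:ℝ)))) * (X - C ((n:ℝ)))).coeff m := by
      rw [stirling1, Finset.prod_range_succ]
    cases m with
    | zero =>
      rw [Polynomial.mul_coeff_zero, hs, Polynomial.mul_coeff_zero]
      rw [ih 0 (Nat.zero_le n)]
      simp only [Polynomial.coeff_sub, Polynomial.coeff_X_zero, Polynomial.coeff_C_zero]
      rw [stirling1]
      have : n + 1 - 0 = n + 1 := rfl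
      rw [this, Nat.sub_zero, pow_succ']
      ring
    | succ k =>
      rw [Polynomial.coeff_mul_X_sub_C, hs, Polynomial.coeff_mul_X_sub_C]
      have hk : k ≤ n := Nat.succ_le_succ_iff.mp hm
      rcases Nat.lt_or_ge k n with hkn | hkn
      · rw [ih k hk, ih (k+1) hkn]
        rw [stirling1, stirling1]
        have h1 : n + 1 - (k+1) = n - k := by omega
        have h2 : n - k = (n - (k+1)) + 1 := by omega
        rw [h1, h2, pow_succ]
        ring
      · have hkn' : k = n := le_antisymm hk hkn
        have hz1 : (∏ i ∈ range n, (X - C ((i:ℝ) * lam))).coeff (k+1) = 0 :=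
          Polynomial.coeff_eq_zero_of_natDegree_lt (by rw [myNatDegree_prod_X_sub_C]; omega)
        have hz2 : (∏ i ∈ range n, (X - C ((i:ℝ)))).coeff (k+1) = 0 :=
          Polynomial.coeff_eq_zero_of_natDegree_lt (by rw [myNatDegree_prod_X_sub_C]; omega)
        rw [hz1, hz2, ih k hk, hkn']
        simp [stirling1]
lemma degFall_eq_sum_stirling1 (lam y : ℝ) (n : ℕ) :
    degFall y lam n = ∑ m ∈ range (n+1), lam^(n-m) * stirling1 n m * y^m := by
  have he : degFall y lam n = (∏ i ∈ range n, (X - C ((i:ℝ) * lam))).eval y := by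
    rw [Polynomial.eval_prod, degFall]
    apply Finset.prod_congr rfl
    intro i _
    simp
  rw [he, Polynomial.eval_eq_sum_range' (n := n+1)
    (by rw [myNatDegree_prod_X_sub_C]; omega)]
  apply Finset.sum_congr rfl
  intro m hm
  rw [Finset.mem_range, Nat.lt_succ_iff] at hm
  rw [coeff_prod_X_sub_C_mul lam n m hm]

end StirlingPoly

lemma choose_term_eq (x : ℝ) (j k : ℕ) :
    (((k+j).choose j : ℕ) : ℝ) * x^(k+j) / (k+j).factorial
      = x^j / j.factorial * (x^k / k.factorial) := by
  have h : (((k+j).choose j : ℕ) : ℝ) * (k.factorial : ℝ) * (j.factorial : ℝ)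
      = ((k+j).factorial : ℝ) := by
    exact_mod_cast congrArg (Nat.cast (R := ℝ)) (Nat.add_choose_mul_factorial_mul_factorial k j)
  have h1 : ((k+j).factorial : ℝ) ≠ 0 := Nat.cast_ne_zero.mpr (k+j).factorial_ne_zero
  have h2 : (k.factorial : ℝ) ≠ 0 := Nat.cast_ne_zero.mpr k.factorial_ne_zero
  have h3 : (j.factorial : ℝ) ≠ 0 := Nat.cast_ne_zero.mpr j.factorial_ne_zero
  rw [pow_add]
  field_simp
  rw [← h]
  ring

lemma summable_choose (x : ℝ) (j : ℕ) :
    Summable (fun k : ℕ => ((k.choose j : ℕ) : ℝ) * x^k / k.factorial) := by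
  rw [← summable_nat_add_iff j]
  have he : (fun k : ℕ => (((k+j).choose j : ℕ) : ℝ) * x^(k+j) / (k+j).factorial)
      = fun k : ℕ => x^j / j.factorial * (x^k / k.factorial) := by
    funext k; exact choose_term_eq x j k
  rw [he]
  exact (Real.summable_pow_div_factorial x).mul_left _

lemma tsum_choose (x : ℝ) (j : ℕ) :
    ∑' k : ℕ, ((k.choose j : ℕ) : ℝ) * x^k / k.factorial
      = x^j / j.factorial * Real.exp x := by
  rw [← Summable.sum_add_tsum_nat_add j (summable_choose x j)]
  have h0 : ∑ i ∈ range j, ((i.choose j : ℕ) : ℝ) * x^i / i.factorial = 0 := by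
    apply Finset.sum_eq_zero
    intro i hi
    rw [Finset.mem_range] at hi
    rw [Nat.choose_eq_zero_of_lt hi]
    simp
  rw [h0, zero_add]
  have he : (fun k : ℕ => (((k+j).choose j : ℕ) : ℝ) * x^(k+j) / (k+j).factorial)
      = fun k : ℕ => x^j / j.factorial * (x^k / k.factorial) := by
    funext k; exact choose_term_eq x j k
  rw [he, tsum_mul_left]
  congr 1
  rw [Real.exp_eq_exp_ℝ, NormedSpace.exp_eq_tsum_div]

lemma pow_le_factorial_ratio (k m : ℕ) :
    ((k:ℝ)+1)^m ≤ ((k+m).factorial : ℝ) / (k.factorial : ℝ) := by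
  induction m with
  | zero =>
    simp only [pow_zero, Nat.add_zero]
    rw [div_self (by positivity : ((k.factorial : ℝ)) ≠ 0)]
  | succ m ih =>
    have hk : (0:ℝ) < (k.factorial : ℝ) := by positivity
    rw [pow_succ]
    have h2 : ((k+m).factorial : ℝ) / (k.factorial : ℝ) * ((k:ℝ)+1)
        ≤ ((k+m).factorial : ℝ) / (k.factorial : ℝ) * ((k:ℝ)+m+1) := by
      apply mul_le_mul_of_nonneg_left (by push_cast; linarith) (by positivity)
    calc ((k:ℝ)+1)^m * ((k:ℝ)+1) ≤ ((k+m).factorial : ℝ) / (k.factorial : ℝ) * ((k:ℝ)+1) := by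
          apply mul_le_mul_of_nonneg_right ih (by positivity)
      _ ≤ ((k+m).factorial : ℝ) / (k.factorial : ℝ) * ((k:ℝ)+m+1) := h2
      _ = ((k+m+1).factorial : ℝ) / (k.factorial : ℝ) := by
          rw [show k+m+1 = (k+m)+1 from rfl, Nat.factorial_succ]
          push_cast
          field_simp

lemma factorial_ratio_le (k m : ℕ) :
    ((k+m).factorial : ℝ) / (k.factorial : ℝ) ≤ 2^(k+m) * (m.factorial : ℝ) := by
  have h1 : (k+m).choose m ≤ 2^(k+m) := by
    calc (k+m).choose m ≤ ∑ i ∈ range (k+m+1), (k+m).choose i :=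
          Finset.single_le_sum (fun i _ => Nat.zero_le _) (by rw [Finset.mem_range]; omega)
      _ = 2^(k+m) := Nat.sum_range_choose (k+m)
  have h2 : ((k+m).choose m : ℝ) * (k.factorial : ℝ) * (m.factorial : ℝ) = ((k+m).factorial : ℝ) := by
    exact_mod_cast congrArg (Nat.cast (R := ℝ)) (Nat.add_choose_mul_factorial_mul_factorial k m)
  have hk : (0:ℝ) < (k.factorial : ℝ) := by positivity
  rw [div_le_iff₀ hk, ← h2]
  have : ((k+m).choose m : ℝ) ≤ (2:ℝ)^(k+m) := by exact_mod_cast h1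
  have hm : (0:ℝ) ≤ (m.factorial : ℝ) := by positivity
  nlinarith [mul_le_mul_of_nonneg_right this (mul_nonneg hk.le hm)]

lemma summable_abs_main (x : ℝ) (r m : ℕ) :
    Summable (fun k : ℕ => |x ^ k / (k.factorial : ℝ) * ((k : ℝ) + r) ^ m|) := by
  have hbound : ∀ k : ℕ, |x ^ k / (k.factorial : ℝ) * ((k : ℝ) + r) ^ m|
      ≤ ((r:ℝ)+1)^m * 2^m * (m.factorial : ℝ) * ((2*|x|)^k / (k.factorial : ℝ)) := by
    intro k
    rw [abs_mul, abs_div, abs_pow, abs_pow]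
    have hk : (0:ℝ) < (k.factorial : ℝ) := by positivity
    rw [abs_of_nonneg hk.le, abs_of_nonneg (by positivity : (0:ℝ) ≤ (k:ℝ)+r)]
    have c1 : ((k:ℝ)+r)^m ≤ (((r:ℝ)+1)*((k:ℝ)+1))^m := by
      apply pow_le_pow_left₀ (by positivity)
      nlinarith [Nat.cast_nonneg (α := ℝ) k, Nat.cast_nonneg (α := ℝ) r]
    have c2 : (((r:ℝ)+1)*((k:ℝ)+1))^m = ((r:ℝ)+1)^m * ((k:ℝ)+1)^m := mul_pow _ _ _
    have c3 : ((k:ℝ)+1)^m ≤ 2^(k+m) * (m.factorial : ℝ) :=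
      le_trans (pow_le_factorial_ratio k m) (factorial_ratio_le k m)
    have c4 : ((k:ℝ)+r)^m ≤ ((r:ℝ)+1)^m * (2^(k+m) * (m.factorial : ℝ)) := by
      calc ((k:ℝ)+r)^m ≤ (((r:ℝ)+1)*((k:ℝ)+1))^m := c1
        _ = ((r:ℝ)+1)^m * ((k:ℝ)+1)^m := c2
        _ ≤ ((r:ℝ)+1)^m * (2^(k+m) * (m.factorial : ℝ)) := by
            apply mul_le_mul_of_nonneg_left c3 (by positivity)
    have hxk : (0:ℝ) ≤ |x|^k / (k.factorial : ℝ) := by positivity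
    calc |x|^k / (k.factorial : ℝ) * ((k:ℝ)+r)^m
        ≤ |x|^k / (k.factorial : ℝ) * (((r:ℝ)+1)^m * (2^(k+m) * (m.factorial : ℝ))) := by
          exact mul_le_mul_of_nonneg_left c4 hxk
      _ = ((r:ℝ)+1)^m * 2^m * (m.factorial : ℝ) * ((2*|x|)^k / (k.factorial : ℝ)) := by
          rw [pow_add, mul_pow]
          field_simp
  apply Summable.of_nonneg_of_le (fun k => abs_nonneg _) hbound
  exact (Real.summable_pow_div_factorial (2*|x|)).mul_left _

-- coeff n of (degExp r * (E-1)^j) vanishes for j > n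
lemma coeff_mul_sub_one_pow (lam : ℝ) (r : ℕ) {n j : ℕ} (h : n < j) :
    PowerSeries.coeff n (degExp lam r * (degExp lam 1 - 1)^j) = 0 := by
  rw [PowerSeries.coeff_mul]
  apply Finset.sum_eq_zero
  intro p hp
  rw [Finset.HasAntidiagonal.mem_antidiagonal] at hp
  rw [coeff_sub_one_pow lam (by omega : p.2 < j), mul_zero]


theorem extDegBell_dobinski (lam : ℝ) (r : ℕ) (n : ℕ) (x : ℝ) :
    (∀ m ∈ Finset.range (n + 1),
      Summable fun k : ℕ => |x ^ k / (k.factorial : ℝ) * ((k : ℝ) + r) ^ m|) ∧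
    extDegBell lam r x n =
      Real.exp (-x) *
        ∑ m ∈ Finset.range (n + 1), lam ^ (n - m) * stirling1 n m *
          ∑' k : ℕ, x ^ k / (k.factorial : ℝ) * ((k : ℝ) + r) ^ m := by
  refine ⟨fun m _ => summable_abs_main x r m, ?_⟩
  set d : ℕ → ℝ := fun j =>
    (n.factorial : ℝ) * PowerSeries.coeff n (degExp lam r * (degExp lam 1 - 1)^j) with hd
  -- LHS
  have hL : extDegBell lam r x n = ∑ j ∈ range (n+1), x^j / j.factorial * d j := by
    have hcb : ∀ b : ℕ, b ≤ n →
        PowerSeries.coeff b (expComp (x • (degExp lam 1 - 1)))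
          = ∑ k ∈ range (n+1),
              x^k / k.factorial * PowerSeries.coeff b ((degExp lam 1 - 1)^k) := by
      intro b hb
      rw [expComp, PowerSeries.coeff_mk]
      have hterm : ∀ k : ℕ,
          PowerSeries.coeff b ((x • (degExp lam 1 - 1)) ^ k) / k.factorial
            = x^k / k.factorial * PowerSeries.coeff b ((degExp lam 1 - 1)^k) := by
        intro k
        rw [smul_pow, PowerSeries.coeff_smul, smul_eq_mul]
        ring
      rw [tsum_congr hterm]
      apply tsum_eq_sum
      intro k hk
      rw [Finset.mem_range] at hk
      rw [coeff_sub_one_pow lam (by omega : b < k)]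
      ring
    have step1 : PowerSeries.coeff n (degExp lam r * expComp (x • (degExp lam 1 - 1)))
        = ∑ p ∈ Finset.HasAntidiagonal.antidiagonal n, PowerSeries.coeff p.1 (degExp lam r) *
            ∑ k ∈ range (n+1), x^k / k.factorial * PowerSeries.coeff p.2 ((degExp lam 1 - 1)^k) := by
      rw [PowerSeries.coeff_mul]
      apply Finset.sum_congr rfl
      intro p hp
      rw [Finset.HasAntidiagonal.mem_antidiagonal] at hp
      rw [hcb p.2 (by omega)]
    rw [extDegBell, step1, Finset.mul_sum]
    have e : ∀ p ∈ Finset.HasAntidiagonal.antidiagonal n,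
        (n.factorial : ℝ) * (PowerSeries.coeff p.1 (degExp lam r) *
            ∑ k ∈ range (n+1), x^k / k.factorial * PowerSeries.coeff p.2 ((degExp lam 1 - 1)^k))
          = ∑ k ∈ range (n+1), x^k / k.factorial *
              ((n.factorial : ℝ) * (PowerSeries.coeff p.1 (degExp lam r) *
                PowerSeries.coeff p.2 ((degExp lam 1 - 1)^k))) := by
      intro p _
      rw [Finset.mul_sum, Finset.mul_sum]
      apply Finset.sum_congr rfl
      intro k _
      ring
    rw [Finset.sum_congr rfl e, Finset.sum_comm]
    apply Finset.sum_congr rfl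
    intro j _
    simp only [hd]
    rw [PowerSeries.coeff_mul, Finset.mul_sum, Finset.mul_sum]
  -- RHS
  have hsum1 : ∀ m ∈ range (n+1),
      Summable (fun k : ℕ => lam^(n-m) * stirling1 n m * (x^k / (k.factorial:ℝ) * ((k:ℝ)+r)^m)) :=
    fun m _ => ((summable_abs_main x r m).of_abs).mul_left _
  have hR1 : ∑ m ∈ range (n+1), lam^(n-m) * stirling1 n m *
        ∑' k : ℕ, x ^ k / (k.factorial : ℝ) * ((k : ℝ) + r) ^ m
      = ∑' k : ℕ, ∑ m ∈ range (n+1),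
          lam^(n-m) * stirling1 n m * (x ^ k / (k.factorial : ℝ) * ((k : ℝ) + r) ^ m) := by
    rw [Summable.tsum_finsetSum hsum1]
    apply Finset.sum_congr rfl
    intro m _
    rw [tsum_mul_left]
  have hR2 : ∀ k : ℕ, ∑ m ∈ range (n+1),
        lam^(n-m) * stirling1 n m * (x ^ k / (k.factorial : ℝ) * ((k : ℝ) + r) ^ m)
      = x ^ k / (k.factorial : ℝ) * degFall ((k:ℝ)+r) lam n := by
    intro k
    rw [degFall_eq_sum_stirling1, Finset.mul_sum]
    apply Finset.sum_congr rfl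
    intro m _
    ring
  have hdz : ∀ j, n < j → d j = 0 := by
    intro j hj
    rw [hd]
    simp only []
    rw [coeff_mul_sub_one_pow lam r hj, mul_zero]
  have hR3 : ∀ k : ℕ, degFall ((k:ℝ)+r) lam n
      = ∑ j ∈ range (n+1), ((k.choose j : ℕ) : ℝ) * d j := by
    intro k
    have h1 : degFall ((k:ℝ)+r) lam n
        = (n.factorial : ℝ) * PowerSeries.coeff n (degExp lam ((k:ℝ) + (r:ℝ))) := by
      rw [coeff_degExp]
      field_simp
    rw [h1, ← degExp_nat_mul lam r k]
    have h2 : (degExp lam 1)^k = ∑ j ∈ range (k+1),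
        (degExp lam 1 - 1)^j * ((k.choose j : ℕ) : PowerSeries ℝ) := by
      conv_lhs => rw [show degExp lam 1 = (degExp lam 1 - 1) + 1 by ring]
      rw [add_pow]
      apply Finset.sum_congr rfl
      intro j _
      rw [one_pow, mul_one]
    rw [h2, Finset.mul_sum, map_sum, Finset.mul_sum]
    have h3 : ∀ j ∈ range (k+1),
        (n.factorial : ℝ) * PowerSeries.coeff n
            (degExp lam r * ((degExp lam 1 - 1)^j * ((k.choose j : ℕ) : PowerSeries ℝ)))
          = ((k.choose j : ℕ) : ℝ) * d j := by
      intro j _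
      have : degExp lam r * ((degExp lam 1 - 1)^j * ((k.choose j : ℕ) : PowerSeries ℝ))
          = ((k.choose j : ℕ) : ℝ) • (degExp lam r * (degExp lam 1 - 1)^j) := by
        rw [PowerSeries.smul_eq_C_mul, map_natCast (PowerSeries.C (R := ℝ)) (k.choose j)]
        ring
      rw [this, PowerSeries.coeff_smul, smul_eq_mul, hd]
      ring
    rw [Finset.sum_congr rfl h3]
    -- extend/truncate sum range from k+1 to n+1
    have key : ∀ M, k ≤ M → n ≤ M →
        ∑ j ∈ range (M+1), ((k.choose j : ℕ) : ℝ) * d j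
          = ∑ j ∈ range (k+1), ((k.choose j : ℕ) : ℝ) * d j := by
      intro M hk hn
      symm
      apply Finset.sum_subset
      · intro j hj
        rw [Finset.mem_range] at hj ⊢
        omega
      · intro j _ hj
        rw [Finset.mem_range] at hj
        rw [Nat.choose_eq_zero_of_lt (by omega), Nat.cast_zero, zero_mul]
    have key2 : ∀ M, k ≤ M → n ≤ M →
        ∑ j ∈ range (M+1), ((k.choose j : ℕ) : ℝ) * d j
          = ∑ j ∈ range (n+1), ((k.choose j : ℕ) : ℝ) * d j := by
      intro M hk hn
      symm
      apply Finset.sum_subset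
      · intro j hj
        rw [Finset.mem_range] at hj ⊢
        omega
      · intro j _ hj
        rw [Finset.mem_range] at hj
        rw [hdz j (by omega), mul_zero]
    rw [← key (max k n) (le_max_left _ _) (le_max_right _ _),
      key2 (max k n) (le_max_left _ _) (le_max_right _ _)]
  have hsum2 : ∀ j ∈ range (n+1),
      Summable (fun k : ℕ => x ^ k / (k.factorial : ℝ) * (((k.choose j : ℕ) : ℝ) * d j)) := by
    intro j _
    have := (summable_choose x j).mul_right (d j)
    apply this.congr
    intro k
    ring
  have hR4 : ∑' k : ℕ, x ^ k / (k.factorial : ℝ) * degFall ((k:ℝ)+r) lam n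
      = ∑ j ∈ range (n+1), d j * (x^j / j.factorial * Real.exp x) := by
    have : ∀ k : ℕ, x ^ k / (k.factorial : ℝ) * degFall ((k:ℝ)+r) lam n
        = ∑ j ∈ range (n+1), x ^ k / (k.factorial : ℝ) * (((k.choose j : ℕ) : ℝ) * d j) := by
      intro k
      rw [hR3 k, Finset.mul_sum]
    rw [tsum_congr this, Summable.tsum_finsetSum hsum2]
    apply Finset.sum_congr rfl
    intro j _
    rw [← tsum_choose x j, ← tsum_mul_left]
    apply tsum_congr
    intro k
    ring
  rw [hL, hR1, tsum_congr hR2, hR4, Finset.mul_sum]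
  apply Finset.sum_congr rfl
  intro j _
  have hexp : Real.exp (-x) * Real.exp x = 1 := by
    rw [← Real.exp_add]
    simp
  calc x^j / (j.factorial : ℝ) * d j = d j * (x^j / j.factorial) * 1 := by ring
    _ = d j * (x^j / j.factorial) * (Real.exp (-x) * Real.exp x) := by rw [hexp]
    _ = Real.exp (-x) * (d j * (x^j / j.factorial * Real.exp x)) := by ring
end

section
/- (Generating-function identity underlying Theorem 2.1) For λ ∈ ℝ, r a nonnegative integer, and k a nonnegative integer, the following formal power series identity holds: (1/k!)((1+λt)^{1/λ} − 1)^k (1+λt)^{r/λ} = Σ_{n=k}^∞ ( Σ_{l=k}^{n} Σ_{m=0}^{n−l} C(n,l) r^m λ^{n−m−l} S_1(n−l, m) S_{2,λ}(l, k) ) t^n/n!. -/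
open Finset

lemma stirP_monic (j : ℕ) : (∏ i ∈ Finset.range j, (Polynomial.X - Polynomial.C (i : ℝ))).Monic :=
  Polynomial.monic_prod_of_monic _ _ fun i _ => Polynomial.monic_X_sub_C _

lemma stirP_natDegree (j : ℕ) :
    (∏ i ∈ Finset.range j, (Polynomial.X - Polynomial.C (i : ℝ))).natDegree = j := by
  rw [Polynomial.natDegree_prod_of_monic _ _ fun i _ => Polynomial.monic_X_sub_C _]
  simp only [Polynomial.natDegree_X_sub_C]
  simp

lemma degFall_eq_sum (r lam : ℝ) (j : ℕ) :
    degFall r lam j = ∑ m ∈ range (j + 1), stirling1 j m * r ^ m * lam ^ (j - m) := by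
  rcases eq_or_ne lam 0 with h | h
  · subst h
    rw [Finset.sum_eq_single j]
    · have h1 : stirling1 j j = 1 := by
        have := (stirP_monic j).leadingCoeff
        rwa [Polynomial.leadingCoeff, stirP_natDegree] at this
      simp [degFall, h1]
    · intro m hm hmj
      have : m < j := lt_of_le_of_ne (Nat.lt_succ_iff.mp (mem_range.mp hm)) hmj
      simp [Nat.sub_ne_zero_of_lt this, zero_pow]
    · intro h; exact absurd (self_mem_range_succ j) h
  · have key : degFall r lam j =
        lam ^ j * (∏ i ∈ Finset.range j, (Polynomial.X - Polynomial.C (i : ℝ))).eval (r / lam) := by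
      have hl : lam ^ j = ∏ _i ∈ Finset.range j, lam := by simp
      rw [Polynomial.eval_prod, hl, ← Finset.prod_mul_distrib]
      refine Finset.prod_congr rfl fun i _ => ?_
      simp only [Polynomial.eval_sub, Polynomial.eval_X, Polynomial.eval_C]
      field_simp
    rw [key, Polynomial.eval_eq_sum_range, stirP_natDegree, Finset.mul_sum]
    refine Finset.sum_congr rfl fun m hm => ?_
    have hmj : m ≤ j := Nat.lt_succ_iff.mp (mem_range.mp hm)
    have hpow : lam ^ (j - m) * lam ^ m = lam ^ j := by
      rw [← pow_add]; congr 1; omega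
    rw [div_pow, stirling1]
    field_simp
    rw [← hpow]
    ring

lemma coeff_pow_vanish (lam : ℝ) (k l : ℕ) (hl : l < k) :
    PowerSeries.coeff l ((degExp lam 1 - 1) ^ k) = 0 := by
  have hc : PowerSeries.constantCoeff (degExp lam 1 - 1) = 0 := by
    simp [degExp, degFall, PowerSeries.constantCoeff_mk]
  have hd : (PowerSeries.X : PowerSeries ℝ) ^ k ∣ (degExp lam 1 - 1) ^ k :=
    pow_dvd_pow_of_dvd (PowerSeries.X_dvd_iff.mpr hc) k
  exact (PowerSeries.X_pow_dvd_iff.mp hd) l hl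

theorem genFun_extDegStirling2 (lam : ℝ) (r k : ℕ) :
    ((k.factorial : ℝ))⁻¹ • ((degExp lam 1 - 1) ^ k * degExp lam r) =
      PowerSeries.mk fun n =>
        (∑ l ∈ Finset.Icc k n, ∑ m ∈ Finset.range (n - l + 1),
          (n.choose l : ℝ) * (r : ℝ) ^ m * lam ^ (n - m - l) * stirling1 (n - l) m *
            degStirling2 lam l k) / (n.factorial : ℝ) := by
  ext n
  rw [PowerSeries.coeff_mk, map_smul, smul_eq_mul, PowerSeries.coeff_mul,
    Finset.Nat.sum_antidiagonal_eq_sum_range_succ_mk]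
  have hsub : ∑ l ∈ Finset.Icc k n, ∑ m ∈ Finset.range (n - l + 1),
        (n.choose l : ℝ) * (r : ℝ) ^ m * lam ^ (n - m - l) * stirling1 (n - l) m *
          degStirling2 lam l k
      = ∑ l ∈ Finset.range (n + 1), ∑ m ∈ Finset.range (n - l + 1),
        (n.choose l : ℝ) * (r : ℝ) ^ m * lam ^ (n - m - l) * stirling1 (n - l) m *
          degStirling2 lam l k := by
    refine Finset.sum_subset (fun x hx => ?_) (fun x hx hx' => ?_)
    · simp only [mem_Icc] at hx; exact mem_range.mpr (Nat.lt_succ_of_le hx.2)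
    · have hxk : x < k := by
        simp only [mem_Icc, mem_range] at hx hx'
        omega
      have hz : degStirling2 lam x k = 0 := by
        rw [degStirling2, map_smul, smul_eq_mul, coeff_pow_vanish lam k x hxk]
        ring
      exact Finset.sum_eq_zero fun m _ => by rw [hz, mul_zero]
  rw [hsub, Finset.sum_div, Finset.mul_sum]
  refine Finset.sum_congr rfl fun l hl => ?_
  have hln : l ≤ n := Nat.lt_succ_iff.mp (mem_range.mp hl)
  have hD : PowerSeries.coeff (n - l) (degExp lam r) =
      (∑ m ∈ Finset.range (n - l + 1),
        stirling1 (n - l) m * (r : ℝ) ^ m * lam ^ (n - l - m)) / ((n - l).factorial : ℝ) := by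
    rw [degExp, PowerSeries.coeff_mk, degFall_eq_sum]
  rw [hD, Finset.sum_div, Finset.sum_div, Finset.mul_sum, Finset.mul_sum]
  refine Finset.sum_congr rfl fun m hm => ?_
  have hS : degStirling2 lam l k =
      (l.factorial : ℝ) * ((k.factorial : ℝ)⁻¹ * PowerSeries.coeff l ((degExp lam 1 - 1) ^ k)) := by
    rw [degStirling2, map_smul, smul_eq_mul]
  rw [hS]
  have hfac : ((n.choose l : ℝ)) * (l.factorial : ℝ) * ((n - l).factorial : ℝ) = (n.factorial : ℝ) := by
    exact_mod_cast congrArg (Nat.cast : ℕ → ℝ) (Nat.choose_mul_factorial_mul_factorial hln)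
  have h1 : (n - l - m) = (n - m - l) := by omega
  have hk0 : (k.factorial : ℝ) ≠ 0 := Nat.cast_ne_zero.mpr k.factorial_ne_zero
  have hl0 : (l.factorial : ℝ) ≠ 0 := Nat.cast_ne_zero.mpr l.factorial_ne_zero
  have hnl0 : ((n - l).factorial : ℝ) ≠ 0 := Nat.cast_ne_zero.mpr (n - l).factorial_ne_zero
  have hn0 : (n.factorial : ℝ) ≠ 0 := Nat.cast_ne_zero.mpr n.factorial_ne_zero
  rw [h1]
  field_simp
  rw [← hfac]
  ring
end
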